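/- (Hardy-type bound on telescoped vertical differences.) For every u : (ℤ/kℤ) × {1,…,ℓ} → ℝ, with s(h) = ⌈h/c⌉, Σ_{p∈ℤ/kℤ} Σ_{h=1}^{⌊k/2⌋} ( (1/h) Σ_{i=1}^{s(h)−1} (u(p,i) − u(p,i+1)) )² ≤ (2π²/3) · Σ_{p∈ℤ/kℤ} Σ_{j=1}^{ℓ−1} (u(p,j) − u(p,j+1))². -/

import Mathlib

open Real Finset

noncomputable section

/-- `s(h) = ⌈h/c⌉`, the ceiling of `h/c`. -/
def ceilDivFun (c h : ℕ) : ℕ := (h + c - 1) / c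

private lemma hv_sum_inv_sqrt (n : ℕ) :
    ∑ i ∈ Icc 1 n, 1 / Real.sqrt i ≤ 2 * Real.sqrt n := by
  induction n with
  | zero => simp
  | succ n ih =>
    rw [Finset.sum_Icc_succ_top (by omega : 1 ≤ n + 1)]
    have hx : (0:ℝ) ≤ Real.sqrt n := Real.sqrt_nonneg _
    have hy : (0:ℝ) < Real.sqrt (n+1) := Real.sqrt_pos.2 (by positivity)
    have hx2 : Real.sqrt n ^ 2 = (n:ℝ) := Real.sq_sqrt (by positivity)
    have hy2 : Real.sqrt ((n:ℝ)+1) ^ 2 = (n:ℝ)+1 := Real.sq_sqrt (by positivity)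
    have key : 1 / Real.sqrt ((n:ℝ)+1) ≤ 2 * Real.sqrt ((n:ℝ)+1) - 2 * Real.sqrt n := by
      rw [div_le_iff₀ hy]
      nlinarith [two_mul_le_add_sq (Real.sqrt n) (Real.sqrt ((n:ℝ)+1))]
    push_cast
    push_cast at ih
    linarith

private lemma hv_tail_bound (n : ℕ) (hn : 1 ≤ n) (M : ℕ) (hM : n ≤ M) :
    ∑ h ∈ Icc (n+1) M, 1 / (Real.sqrt h * h) ≤ 2 / Real.sqrt n - 2 / Real.sqrt M := by
  induction M with
  | zero => omega
  | succ M ih =>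
    rcases Nat.lt_or_ge M n with hlt | hge
    · have hnm : n = M + 1 := by omega
      subst hnm
      rw [Finset.Icc_eq_empty (by omega)]
      simp
    · have hsum := ih hge
      rw [Finset.sum_Icc_succ_top (by omega : n + 1 ≤ M + 1)]
      have hx : (0:ℝ) < Real.sqrt M := Real.sqrt_pos.2 (by
        have : 0 < M := by omega
        exact_mod_cast this)
      have hx1 : (1:ℝ) ≤ Real.sqrt M := by
        rw [show (1:ℝ) = Real.sqrt 1 by simp]
        exact Real.sqrt_le_sqrt (by exact_mod_cast hn.trans hge)
      have hy : (0:ℝ) < Real.sqrt ((M:ℝ)+1) := Real.sqrt_pos.2 (by positivity)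
      have hx2 : Real.sqrt M ^ 2 = (M:ℝ) := Real.sq_sqrt (by positivity)
      have hy2 : Real.sqrt ((M:ℝ)+1) ^ 2 = (M:ℝ)+1 := Real.sq_sqrt (by positivity)
      have hxy : Real.sqrt M ≤ Real.sqrt ((M:ℝ)+1) := Real.sqrt_le_sqrt (by linarith)
      have step : 1 / (Real.sqrt ((M:ℝ)+1) * ((M:ℝ)+1))
          ≤ 2 / Real.sqrt M - 2 / Real.sqrt ((M:ℝ)+1) := by
        rw [div_sub_div _ _ hx.ne' hy.ne', div_le_div_iff₀ (by positivity) (by positivity)]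
        nlinarith [mul_pos hx hy, sq_nonneg (Real.sqrt ((M:ℝ)+1) - Real.sqrt M),
          mul_pos (mul_pos hx hy) hy]
      push_cast
      push_cast at hsum
      linarith

private lemma hv_cs (n : ℕ) (a : ℕ → ℝ) :
    (∑ i ∈ Icc 1 n, a i) ^ 2
      ≤ (∑ i ∈ Icc 1 n, 1 / Real.sqrt i) * ∑ i ∈ Icc 1 n, Real.sqrt i * a i ^ 2 := by
  have h := Finset.sum_mul_sq_le_sq_mul_sq (Icc 1 n)
    (fun i => Real.sqrt (1 / Real.sqrt i)) (fun i => Real.sqrt (Real.sqrt i) * a i)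
  have e1 : ∀ i ∈ Icc 1 n,
      Real.sqrt (1 / Real.sqrt i) * (Real.sqrt (Real.sqrt i) * a i) = a i := by
    intro i hi
    have hi1 : (1:ℕ) ≤ i := (Finset.mem_Icc.1 hi).1
    have hs : (0:ℝ) < Real.sqrt i := Real.sqrt_pos.2 (by exact_mod_cast hi1)
    rw [← mul_assoc, ← Real.sqrt_mul (by positivity), one_div_mul_cancel hs.ne', Real.sqrt_one,
      one_mul]
  have e2 : ∀ i ∈ Icc 1 n, Real.sqrt (1 / Real.sqrt i) ^ 2 = 1 / Real.sqrt i := by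
    intro i _; exact Real.sq_sqrt (by positivity)
  have e3 : ∀ i ∈ Icc 1 n, (Real.sqrt (Real.sqrt i) * a i) ^ 2 = Real.sqrt i * a i ^ 2 := by
    intro i _
    rw [mul_pow, Real.sq_sqrt (Real.sqrt_nonneg _)]
  rw [Finset.sum_congr rfl e1, Finset.sum_congr rfl e2, Finset.sum_congr rfl e3] at h
  exact h

private lemma hv_per_column (c K L : ℕ) (hc : 3 ≤ c)
    (hKL : ∀ h ∈ Icc 1 K, ceilDivFun c h - 1 ≤ L) (a : ℕ → ℝ) :
    ∑ h ∈ Icc 1 K, ((1 / (h : ℝ)) * ∑ i ∈ Icc 1 (ceilDivFun c h - 1), a i) ^ 2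
      ≤ (2 * π ^ 2 / 3) * ∑ j ∈ Icc 1 L, a j ^ 2 := by
  have hcpos : 0 < c := by omega
  have hcR : (0:ℝ) < c := by exact_mod_cast hcpos
  have hscpos : (0:ℝ) < Real.sqrt c := Real.sqrt_pos.2 hcR
  -- membership characterization
  have hmem : ∀ i h : ℕ, 1 ≤ i → (i ≤ ceilDivFun c h - 1 ↔ c * i + 1 ≤ h) := by
    intro i h hi
    unfold ceilDivFun
    rw [show (i ≤ (h + c - 1) / c - 1 ↔ i + 1 ≤ (h + c - 1) / c) from by omega,
      Nat.le_div_iff_mul_le hcpos]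
    have he : (i + 1) * c = c * i + c := by ring
    omega
  -- the weight
  set w : ℕ → ℝ := fun h => 2 / (Real.sqrt c * (Real.sqrt h * h)) with hw
  have hwnn : ∀ h : ℕ, 0 ≤ w h := fun h => by
    simp only [hw]; positivity
  -- step 1 + 2: pointwise bound
  have step12 : ∀ h ∈ Icc 1 K,
      ((1 / (h : ℝ)) * ∑ i ∈ Icc 1 (ceilDivFun c h - 1), a i) ^ 2
        ≤ w h * ∑ i ∈ Icc 1 (ceilDivFun c h - 1), Real.sqrt i * a i ^ 2 := by
    intro h hh
    have hh1 : 1 ≤ h := (Finset.mem_Icc.1 hh).1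
    have hhR : (0:ℝ) < h := by exact_mod_cast hh1
    set m := ceilDivFun c h - 1 with hm
    have hmc : (m : ℝ) ≤ (h : ℝ) / c := by
      have hnat : m * c ≤ h := by
        show (ceilDivFun c h - 1) * c ≤ h
        unfold ceilDivFun
        rw [Nat.sub_one_mul]
        have hd := Nat.div_mul_le_self (h + c - 1) c
        generalize (h + c - 1) / c * c = t at hd ⊢
        omega
      rw [le_div_iff₀ hcR]
      exact_mod_cast hnat
    have hsm : Real.sqrt m ≤ Real.sqrt h / Real.sqrt c := by
      rw [← Real.sqrt_div (by positivity)]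
      exact Real.sqrt_le_sqrt hmc
    have hinner : (∑ i ∈ Icc 1 m, a i) ^ 2
        ≤ 2 * Real.sqrt m * ∑ i ∈ Icc 1 m, Real.sqrt i * a i ^ 2 := by
      calc (∑ i ∈ Icc 1 m, a i) ^ 2
          ≤ (∑ i ∈ Icc 1 m, 1 / Real.sqrt i) * ∑ i ∈ Icc 1 m, Real.sqrt i * a i ^ 2 :=
            hv_cs m a
        _ ≤ 2 * Real.sqrt m * ∑ i ∈ Icc 1 m, Real.sqrt i * a i ^ 2 := by
            apply mul_le_mul_of_nonneg_right (hv_sum_inv_sqrt m)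
            apply Finset.sum_nonneg
            intro i _; positivity
    have hsumnn : 0 ≤ ∑ i ∈ Icc 1 m, Real.sqrt i * a i ^ 2 :=
      Finset.sum_nonneg fun i _ => by positivity
    have hsqh : Real.sqrt h * Real.sqrt h = (h:ℝ) := Real.mul_self_sqrt (by positivity)
    have hshpos : (0:ℝ) < Real.sqrt h := Real.sqrt_pos.2 hhR
    calc ((1 / (h : ℝ)) * ∑ i ∈ Icc 1 m, a i) ^ 2
        = (1 / (h:ℝ))^2 * (∑ i ∈ Icc 1 m, a i) ^ 2 := by ring
      _ ≤ (1 / (h:ℝ))^2 * (2 * Real.sqrt m * ∑ i ∈ Icc 1 m, Real.sqrt i * a i ^ 2) := by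
          apply mul_le_mul_of_nonneg_left hinner (by positivity)
      _ = (2 * Real.sqrt m / (h:ℝ)^2) * ∑ i ∈ Icc 1 m, Real.sqrt i * a i ^ 2 := by ring
      _ ≤ w h * ∑ i ∈ Icc 1 m, Real.sqrt i * a i ^ 2 := by
          apply mul_le_mul_of_nonneg_right _ hsumnn
          rw [hw]
          rw [div_le_div_iff₀ (by positivity) (by positivity)]
          have : Real.sqrt m * (Real.sqrt c * (Real.sqrt h * h)) ≤
              (Real.sqrt h / Real.sqrt c) * (Real.sqrt c * (Real.sqrt h * h)) := by
            apply mul_le_mul_of_nonneg_right hsm (by positivity)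
          calc 2 * Real.sqrt m * (Real.sqrt c * (Real.sqrt h * (h:ℝ)))
              ≤ 2 * ((Real.sqrt h / Real.sqrt c) * (Real.sqrt c * (Real.sqrt h * h))) := by
                linarith
            _ = 2 * (h:ℝ)^2 := by
                field_simp
                linear_combination hsqh
  -- sum it up and swap
  calc ∑ h ∈ Icc 1 K, ((1 / (h : ℝ)) * ∑ i ∈ Icc 1 (ceilDivFun c h - 1), a i) ^ 2
      ≤ ∑ h ∈ Icc 1 K, w h * ∑ i ∈ Icc 1 (ceilDivFun c h - 1), Real.sqrt i * a i ^ 2 :=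
        Finset.sum_le_sum step12
    _ = ∑ h ∈ Icc 1 K, ∑ i ∈ Icc 1 L,
          (if c * i + 1 ≤ h then w h * (Real.sqrt i * a i ^ 2) else 0) := by
        refine Finset.sum_congr rfl fun h hh => ?_
        rw [Finset.mul_sum (Icc 1 (ceilDivFun c h - 1)) _ (w h)]
        rw [show (∑ i ∈ Icc 1 L, if c * i + 1 ≤ h then w h * (Real.sqrt i * a i ^ 2) else 0)
            = ∑ i ∈ (Icc 1 L).filter (fun i => c * i + 1 ≤ h),
                w h * (Real.sqrt i * a i ^ 2) from (Finset.sum_filter _ _).symm]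
        apply Finset.sum_congr _ (fun i _ => rfl)
        ext i
        simp only [Finset.mem_Icc, Finset.mem_filter]
        constructor
        · intro ⟨hi1, hi2⟩
          exact ⟨⟨hi1, le_trans hi2 (hKL h hh)⟩, (hmem i h hi1).1 hi2⟩
        · intro ⟨⟨hi1, _⟩, hi3⟩
          exact ⟨hi1, (hmem i h hi1).2 hi3⟩
    _ = ∑ i ∈ Icc 1 L, ∑ h ∈ Icc 1 K,
          (if c * i + 1 ≤ h then w h * (Real.sqrt i * a i ^ 2) else 0) := Finset.sum_comm
    _ = ∑ i ∈ Icc 1 L, (∑ h ∈ Icc (c * i + 1) K, w h) * (Real.sqrt i * a i ^ 2) := by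
        refine Finset.sum_congr rfl fun i _ => ?_
        rw [show (∑ h ∈ Icc 1 K, if c * i + 1 ≤ h then w h * (Real.sqrt i * a i ^ 2) else 0)
            = ∑ h ∈ (Icc 1 K).filter (fun h => c * i + 1 ≤ h),
                w h * (Real.sqrt i * a i ^ 2) from (Finset.sum_filter _ _).symm]
        rw [show (Icc 1 K).filter (fun h => c * i + 1 ≤ h) = Icc (c * i + 1) K from by
          ext h; simp only [Finset.mem_Icc, Finset.mem_filter]; omega]
        rw [← Finset.sum_mul]
    _ ≤ ∑ i ∈ Icc 1 L, (4 / (c:ℝ)) * a i ^ 2 := by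
        refine Finset.sum_le_sum fun i hi => ?_
        have hi1 : 1 ≤ i := (Finset.mem_Icc.1 hi).1
        have hiR : (0:ℝ) < i := by exact_mod_cast hi1
        have hsipos : (0:ℝ) < Real.sqrt i := Real.sqrt_pos.2 hiR
        have htail : ∑ h ∈ Icc (c * i + 1) K, w h ≤ 4 / ((c:ℝ) * Real.sqrt i) := by
          have h1 : ∑ h ∈ Icc (c * i + 1) K, w h
              = (2 / Real.sqrt c) * ∑ h ∈ Icc (c * i + 1) K, 1 / (Real.sqrt h * h) := by
            rw [Finset.mul_sum]
            refine Finset.sum_congr rfl fun h _ => ?_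
            rw [hw]
            field_simp
          rcases Nat.lt_or_ge K (c * i) with hK | hK
          · -- empty-ish tail: sum over Icc (c*i+1) K with K < c*i+1
            rw [Finset.Icc_eq_empty (by omega)]
            positivity
          · have h2 := hv_tail_bound (c * i) (Nat.mul_pos hcpos hi1) K hK
            have h3 : (0:ℝ) < Real.sqrt K := Real.sqrt_pos.2 (by
              exact_mod_cast lt_of_lt_of_le (Nat.mul_pos hcpos hi1) hK)
            have h4 : ∑ h ∈ Icc (c * i + 1) K, 1 / (Real.sqrt h * h) ≤ 2 / Real.sqrt (c * i) := by
              have : (0:ℝ) ≤ 2 / Real.sqrt K := by positivity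
              push_cast at h2 ⊢
              linarith
            rw [h1]
            have h5 : Real.sqrt ((c:ℝ) * i) = Real.sqrt c * Real.sqrt i := Real.sqrt_mul (by positivity) _
            calc (2 / Real.sqrt c) * ∑ h ∈ Icc (c * i + 1) K, 1 / (Real.sqrt h * h)
                ≤ (2 / Real.sqrt c) * (2 / Real.sqrt (c * i)) := by
                  apply mul_le_mul_of_nonneg_left _ (by positivity)
                  exact h4
              _ = 4 / ((c:ℝ) * Real.sqrt i) := by
                  rw [h5]
                  rw [div_mul_div_comm]
                  congr 1
                  · norm_num
                  · rw [show Real.sqrt c * (Real.sqrt c * Real.sqrt i) = (Real.sqrt c * Real.sqrt c) * Real.sqrt i from by ring, Real.mul_self_sqrt (by positivity)]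
        calc (∑ h ∈ Icc (c * i + 1) K, w h) * (Real.sqrt i * a i ^ 2)
            ≤ (4 / ((c:ℝ) * Real.sqrt i)) * (Real.sqrt i * a i ^ 2) := by
              apply mul_le_mul_of_nonneg_right htail (by positivity)
          _ = (4 / (c:ℝ)) * a i ^ 2 := by
              field_simp
    _ ≤ (2 * π ^ 2 / 3) * ∑ j ∈ Icc 1 L, a j ^ 2 := by
        rw [Finset.mul_sum]
        refine Finset.sum_le_sum fun i _ => ?_
        have hpi : (3:ℝ) < π := Real.pi_gt_three
        have hc3 : (3:ℝ) ≤ c := by exact_mod_cast hc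
        have h4c : 4 / (c:ℝ) ≤ 2 * π ^ 2 / 3 := by
          have : 4 / (c:ℝ) ≤ 4 / 3 := by
            apply div_le_div_of_nonneg_left (by norm_num) (by norm_num) hc3
          nlinarith
        exact mul_le_mul_of_nonneg_right h4c (sq_nonneg _)

theorem hardy_vertical_bound (k ℓ c : ℕ) [NeZero k]
    (h1 : 4 * ℓ < k) (h2 : k < 2 * c * ℓ)
    (u : ZMod k → ℕ → ℝ) :
    ∑ p : ZMod k, ∑ h ∈ Finset.Icc 1 (k / 2),
      ((1 / (h : ℝ)) * ∑ i ∈ Finset.Icc 1 (ceilDivFun c h - 1), (u p i - u p (i + 1))) ^ 2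
    ≤ (2 * π ^ 2 / 3) *
      ∑ p : ZMod k, ∑ j ∈ Finset.Icc 1 (ℓ - 1), (u p j - u p (j + 1)) ^ 2 := by
  have hl : 1 ≤ ℓ := by
    rcases Nat.eq_zero_or_pos ℓ with h | h
    · subst h; simp at h2
    · exact h
  have hc3 : 3 ≤ c := by
    by_contra hcon
    push_neg at hcon
    interval_cases c <;> omega
  rw [Finset.mul_sum]
  refine Finset.sum_le_sum fun p _ => ?_
  apply hv_per_column c (k/2) (ℓ-1) hc3
  intro h hh
  have hh2 : h ≤ k / 2 := (Finset.mem_Icc.1 hh).2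
  have hcl : h ≤ c * ℓ := by
    have ht : k < 2 * (c * ℓ) := by linarith [h2]
    omega
  unfold ceilDivFun
  have : (h + c - 1) / c ≤ ℓ := by
    have hle : h + c - 1 ≤ c * ℓ + (c - 1) := by omega
    calc (h + c - 1) / c ≤ (c * ℓ + (c - 1)) / c := Nat.div_le_div_right hle
      _ = ℓ + (c - 1) / c := by rw [Nat.mul_add_div (by omega)]
      _ = ℓ := by rw [Nat.div_eq_of_lt (by omega)]; simp
  omega
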